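/- Let λ, μ be partitions, a ≥ μ₁ an integer, N ≥ l(λ) + l(μ), and let ν = (λ₁+a, …, λ_r+a, a, …, a, a−μ_s, …, a−μ₁) be the partition of length N obtained by joining λ (shifted by a) and the complement of μ. Define φ_N(λ,x) = Π_{(i,j)∈λ} ((j−1)+k(i−1−N)+x)/(λᵢ−j+k(i−1−λ'_j)+x). Then φ_N(ν,x) = φ_N(λ,x) · φ_N(μ,x) · Π_{i=1}^{l(λ)} Π_{j=1}^{l(μ')} [(λᵢ+j−1+k(i−1−N)+x)/(j−1+k(i−1−N)+x)] · [(j−1+k(i−1+μ'_j−N)+x)/(λᵢ+j−1+k(i−1+μ'_j−N)+x)], as rational functions in x and k. -/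

import Mathlib

/-- The conjugate partition: λ'_{j+1} = #{i < n : λᵢ > j} (0-based column index j). -/
def conjPart (lam : ℕ → ℕ) (n j : ℕ) : ℕ :=
  ((Finset.range n).filter fun i => j < lam i).card

/-- φ_p(λ,x) = Π_{(i,j)∈λ} ((j−1) + k(i−1−p) + x) / (λᵢ − j + k(i−1−λ'_j) + x),
with 0-based box indices, `rows` rows and parameter p. -/
noncomputable def phiP (lam : ℕ → ℕ) (rows : ℕ) (p x k : ℝ) : ℝ :=
  ∏ i ∈ Finset.range rows, ∏ j ∈ Finset.range (lam i),
    ((j : ℝ) + k * ((i : ℝ) - p) + x) /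
      ((lam i : ℝ) - ((j : ℝ) + 1) + k * ((i : ℝ) - (conjPart lam rows j : ℝ)) + x)

/-- The partition ν = (λ₁+a, …, λ_r+a, a, …, a, a−μ_s, …, a−μ₁) of length N. -/
def nuJoin (lam mu : ℕ → ℕ) (r s N a : ℕ) : ℕ → ℕ := fun i =>
  if i < r then lam i + a
  else if i < N - s then a
  else if i < N then a - mu (N - 1 - i)
  else 0


open Finset


lemma conj_le (mu : ℕ → ℕ) (N s j : ℕ) (h0 : ∀ t, s ≤ t → mu t = 0) :
    conjPart mu N j ≤ s := by
  classical
  have hsub : ((range N).filter fun i => j < mu i) ⊆ range s := by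
    intro i hi
    simp only [mem_filter, mem_range] at hi ⊢
    by_contra h
    push_neg at h
    have := h0 i (by omega)
    omega
  have := Finset.card_le_card hsub
  simpa [conjPart] using this

lemma lt_conj_iff (mu : ℕ → ℕ) (N s : ℕ) (hA : Antitone mu) (h0 : ∀ t, s ≤ t → mu t = 0)
    (hs : s ≤ N) (t j : ℕ) : t < conjPart mu N j ↔ j < mu t := by
  classical
  constructor
  · intro h
    by_contra hc
    push_neg at hc
    have hsub : ((range N).filter fun i => j < mu i) ⊆ range t := by
      intro i hi
      simp only [mem_filter, mem_range] at hi ⊢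
      by_contra hit
      push_neg at hit
      have := hA hit
      omega
    have h2 := Finset.card_le_card hsub
    simp only [conjPart] at h
    simp only [card_range] at h2
    omega
  · intro h
    have ht : t < s := by
      by_contra hc
      push_neg at hc
      have := h0 t hc
      omega
    have hsub : range (t+1) ⊆ (range N).filter fun i => j < mu i := by
      intro i hi
      simp only [mem_range] at hi
      simp only [mem_filter, mem_range]
      exact ⟨by omega, lt_of_lt_of_le h (hA (by omega))⟩
    have h2 := Finset.card_le_card hsub
    simp only [card_range] at h2
    simp only [conjPart]
    omega

lemma conj_eq_zero (mu : ℕ → ℕ) (N j : ℕ) (hA : Antitone mu) (hj : mu 0 ≤ j) :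
    conjPart mu N j = 0 := by
  classical
  have : ((range N).filter fun i => j < mu i) = ∅ := by
    apply Finset.filter_eq_empty_iff.2
    intro i _
    have := hA (Nat.zero_le i)
    omega
  simp [conjPart, this]

/-- telescoping partition of an interval by an antitone sequence of cut points -/
lemma prod_partition {M : Type*} [CommMonoid M] (w : ℕ → ℕ) (hw : ∀ i, w (i+1) ≤ w i)
    (F : ℕ → M) (m : ℕ) :
    (∏ i ∈ range m, ∏ j ∈ Ico (w (i+1)) (w i), F j) = ∏ j ∈ Ico (w m) (w 0), F j := by
  have hA : Antitone w := antitone_nat_of_succ_le hw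
  induction m with
  | zero => simp
  | succ m ih =>
      rw [Finset.prod_range_succ, ih, mul_comm,
        Finset.prod_Ico_consecutive F (hw m) (hA (Nat.zero_le m))]

/-- box swap: product over boxes of a partition, row-wise vs column-wise -/
lemma box_swap (mu : ℕ → ℕ) (N s : ℕ) (hA : Antitone mu) (h0 : ∀ t, s ≤ t → mu t = 0)
    (hs : s ≤ N) (G : ℕ → ℕ → ℝ) :
    (∏ j ∈ range (mu 0), ∏ t ∈ range (conjPart mu N j), G t j)
      = ∏ t ∈ range s, ∏ j ∈ range (mu t), G t j := by
  classical
  have h1 : ∀ t, (∏ j ∈ range (mu t), G t j)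
      = ∏ j ∈ range (mu 0), (if j < mu t then G t j else 1) := by
    intro t
    rw [Finset.prod_ite, Finset.prod_const_one, mul_one]
    apply Finset.prod_congr _ (fun _ _ => rfl)
    ext j
    simp only [mem_filter, mem_range]
    constructor
    · intro h; exact ⟨lt_of_lt_of_le h (hA (Nat.zero_le t)), h⟩
    · intro h; exact h.2
  have h2 : ∀ j, (∏ t ∈ range (conjPart mu N j), G t j)
      = ∏ t ∈ range s, (if j < mu t then G t j else 1) := by
    intro j
    rw [Finset.prod_ite, Finset.prod_const_one, mul_one]
    apply Finset.prod_congr _ (fun _ _ => rfl)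
    ext t
    simp only [mem_filter, mem_range]
    rw [← lt_conj_iff mu N s hA h0 hs]
    constructor
    · intro h; exact ⟨lt_of_lt_of_le h (conj_le mu N s j h0), h⟩
    · intro h; exact h.2
  calc (∏ j ∈ range (mu 0), ∏ t ∈ range (conjPart mu N j), G t j)
      = ∏ j ∈ range (mu 0), ∏ t ∈ range s, (if j < mu t then G t j else 1) := by
        exact Finset.prod_congr rfl (fun j _ => h2 j)
    _ = ∏ t ∈ range s, ∏ j ∈ range (mu 0), (if j < mu t then G t j else 1) :=
        Finset.prod_comm
    _ = ∏ t ∈ range s, ∏ j ∈ range (mu t), G t j :=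
        Finset.prod_congr rfl (fun t _ => (h1 t).symm)

lemma per_u (mu : ℕ → ℕ) (hA : Antitone mu) (s N a b e : ℕ)
    (h0 : ∀ t, s ≤ t → mu t = 0) (hs : s ≤ N) (hbe : b + e + 1 = s) (ha : mu 0 ≤ a)
    (C : ℝ) :
    (∏ j ∈ range (mu b), ((mu (conjPart mu N j - (b+1)) : ℝ) - (j:ℝ) - 1 + C)) *
      ∏ j ∈ Ico (mu b) a, ((j : ℝ) - (mu b : ℝ) + C)
    = (∏ j ∈ range (mu e), ((j : ℝ) + C)) *
      ∏ j ∈ Ico (mu e) a, ((j : ℝ) - (mu (conjPart mu N j + b) : ℝ) + C) := by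
  classical
  set g : ℕ → ℕ → ℝ := fun A B => ∏ v ∈ Ico A B, ((v:ℝ) + C) with hg
  have glue : ∀ {A B D : ℕ}, A ≤ B → B ≤ D → g A B * g B D = g A D := by
    intro A B D h1 h2
    exact Finset.prod_Ico_consecutive _ h1 h2
  have hab : mu b ≤ a := le_trans (hA (Nat.zero_le b)) ha
  -- shift lemma
  have shift : ∀ (c T : ℕ), mu c ≤ T →
      (∏ j ∈ Ico (mu c) T, ((j : ℝ) - (mu (b+c) : ℝ) + C))
        = g (mu c - mu (b+c)) (T - mu (b+c)) := by
    intro c T hT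
    have hcb : mu (b+c) ≤ mu c := hA (by omega)
    simp only [hg]
    rw [Finset.prod_Ico_eq_prod_range, Finset.prod_Ico_eq_prod_range]
    have hlen : T - mu (b+c) - (mu c - mu (b+c)) = T - mu c := by omega
    rw [hlen]
    apply Finset.prod_congr rfl
    intro i _
    have : ((mu c + i : ℕ) : ℝ) = (mu c : ℝ) + i := by push_cast; ring
    rw [this]
    have : ((mu c - mu (b+c) + i : ℕ) : ℝ) = (mu c : ℝ) - (mu (b+c) : ℝ) + i := by
      push_cast [Nat.cast_sub hcb]; ring
    rw [this]; ring
  -- LHS second piece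
  have L2 : (∏ j ∈ Ico (mu b) a, ((j : ℝ) - (mu b : ℝ) + C)) = g 0 (a - mu b) := by
    simp only [hg]
    rw [Finset.prod_Ico_eq_prod_range, Finset.prod_Ico_eq_prod_range]
    rw [Nat.sub_zero]
    apply Finset.prod_congr rfl
    intro i _
    push_cast
    ring
  -- LHS first piece
  have L1 : (∏ j ∈ range (mu b), ((mu (conjPart mu N j - (b+1)) : ℝ) - (j:ℝ) - 1 + C))
      = ∏ l ∈ range (e+1), g (mu l - mu (b+l)) (mu l - mu (b+(l+1))) := by
    have hw : ∀ i, mu (b+(i+1)) ≤ mu (b+i) := fun i => hA (by omega)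
    have hpart := prod_partition (fun i => mu (b+i)) hw
      (fun j => ((mu (conjPart mu N j - (b+1)) : ℝ) - (j:ℝ) - 1 + C)) (e+1)
    have hz : mu (b+(e+1)) = 0 := h0 _ (by omega)
    rw [hz] at hpart
    rw [Nat.Ico_zero_eq_range] at hpart
    simp only [Nat.add_zero] at hpart
    rw [← hpart]
    apply Finset.prod_congr rfl
    intro l hl
    simp only [mem_range] at hl
    -- on Ico (mu (b+(l+1))) (mu (b+l)), conjPart = b+l+1
    have hconj : ∀ j ∈ Ico (mu (b+(l+1))) (mu (b+l)), conjPart mu N j = b + l + 1 := by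
      intro j hj
      simp only [mem_Ico] at hj
      have h1 : b + l < conjPart mu N j := (lt_conj_iff mu N s hA h0 hs (b+l) j).2 hj.2
      have h2 : ¬ (b + (l+1) < conjPart mu N j) := by
        rw [lt_conj_iff mu N s hA h0 hs]
        omega
      omega
    rw [Finset.prod_congr rfl (fun j hj => by rw [hconj j hj])]
    -- now ∏_{j ∈ Ico (mu (b+(l+1))) (mu (b+l))} ((mu (b+l+1 - (b+1)):ℝ) - j - 1 + C)
    have hsimp : b + l + 1 - (b+1) = l := by omega
    simp only [hsimp]
    by_cases hml : mu l = 0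
    · have h1 : mu (b+l) = 0 := by
        have := hA (show l ≤ b + l by omega); omega
      have h2 : mu (b+(l+1)) = 0 := by
        have := hw l; omega
      simp [h1, h2, hml, hg]
    · -- reflect
      have hble : mu (b+l) ≤ mu l := hA (by omega)
      have hrefl := Finset.prod_Ico_reflect (fun v => ((v:ℝ) + C)) (mu (b+(l+1)))
        (n := mu l - 1) (m := mu (b+l)) (by omega)
      simp only [hg]
      rw [show mu l - 1 + 1 - mu (b+l) = mu l - mu (b+l) by omega,
          show mu l - 1 + 1 - mu (b+(l+1)) = mu l - mu (b+(l+1)) by omega] at hrefl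
      rw [← hrefl]
      apply Finset.prod_congr rfl
      intro j hj
      simp only [mem_Ico] at hj
      have hj2 : j < mu l := by have := hw l; omega
      show (mu l : ℝ) - (j:ℝ) - 1 + C = ((mu l - 1 - j : ℕ) : ℝ) + C
      rw [Nat.cast_sub (show j ≤ mu l - 1 by omega), Nat.cast_sub (show 1 ≤ mu l by omega)]
      push_cast
      ring
  -- RHS pieces
  have R1 : (∏ j ∈ range (mu e), ((j : ℝ) + C)) = g 0 (mu e) := by
    simp only [hg, Nat.Ico_zero_eq_range]
  have R2 : (∏ j ∈ Ico (mu e) a, ((j : ℝ) - (mu (conjPart mu N j + b) : ℝ) + C))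
      = ∏ c ∈ range (e+1),
          g (mu c - mu (b+c)) ((if c = 0 then a else mu (c-1)) - mu (b+c)) := by
    set w : ℕ → ℕ := fun i => if i = 0 then a else mu (i-1) with hwdef
    have hw : ∀ i, w (i+1) ≤ w i := by
      intro i
      cases i with
      | zero => simpa [hwdef] using ha
      | succ n => simp only [hwdef, if_neg (Nat.succ_ne_zero _), if_neg (Nat.succ_ne_zero _)]
                  exact hA (by omega)
    have hpart := prod_partition w hw
      (fun j => ((j : ℝ) - (mu (conjPart mu N j + b) : ℝ) + C)) (e+1)
    have hw0 : w 0 = a := by simp [hwdef]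
    have hwe : w (e+1) = mu e := by simp [hwdef]
    rw [hw0, hwe] at hpart
    rw [← hpart]
    apply Finset.prod_congr rfl
    intro c hc
    simp only [mem_range] at hc
    have hwc1 : w (c+1) = mu c := by simp [hwdef]
    have hconj : ∀ j ∈ Ico (w (c+1)) (w c), conjPart mu N j = c := by
      intro j hj
      simp only [mem_Ico, hwc1] at hj
      have h2 : ¬ (c < conjPart mu N j) := by
        rw [lt_conj_iff mu N s hA h0 hs]
        omega
      rcases Nat.eq_zero_or_pos c with hc0 | hcpos
      · omega
      · have h1 : c - 1 < conjPart mu N j := by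
          rw [lt_conj_iff mu N s hA h0 hs]
          have : w c = mu (c-1) := by simp [hwdef, Nat.pos_iff_ne_zero.1 hcpos]
          omega
        omega
    rw [Finset.prod_congr rfl (fun j hj => by rw [hconj j hj])]
    have hT : mu c ≤ w c := by
      have := hw c; rw [hwc1] at this; exact this
    have hsh := shift c (w c) hT
    rw [hwc1, Nat.add_comm c b, hsh]
  rw [L1, L2, R1, R2]
  -- main telescoping induction
  have claim : ∀ n,
      (∏ l ∈ range n, g (mu l - mu (b+l)) (mu l - mu (b+(l+1)))) * g 0 (mu 0 - mu b)
      = g 0 (mu n - mu (b+n)) *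
          ∏ i ∈ range n, g (mu (i+1) - mu (b+(i+1))) (mu i - mu (b+(i+1))) := by
    intro n
    induction n with
    | zero => simp
    | succ n ih =>
        rw [Finset.prod_range_succ, Finset.prod_range_succ]
        have k1 : mu (b+(n+1)) ≤ mu (b+n) := hA (by omega)
        have k2 : mu (b+n) ≤ mu n := hA (by omega)
        have k3 : mu (b+(n+1)) ≤ mu (n+1) := hA (by omega)
        have k4 : mu (n+1) ≤ mu n := hA (by omega)
        have g1 : g 0 (mu n - mu (b+n)) * g (mu n - mu (b+n)) (mu n - mu (b+(n+1)))
            = g 0 (mu n - mu (b+(n+1))) := glue (by omega) (by omega)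
        have g2 : g 0 (mu (n+1) - mu (b+(n+1))) *
            g (mu (n+1) - mu (b+(n+1))) (mu n - mu (b+(n+1)))
            = g 0 (mu n - mu (b+(n+1))) := glue (by omega) (by omega)
        calc (∏ l ∈ range n, g (mu l - mu (b+l)) (mu l - mu (b+(l+1)))) *
              g (mu n - mu (b+n)) (mu n - mu (b+(n+1))) * g 0 (mu 0 - mu b)
            = ((∏ l ∈ range n, g (mu l - mu (b+l)) (mu l - mu (b+(l+1)))) *
                g 0 (mu 0 - mu b)) * g (mu n - mu (b+n)) (mu n - mu (b+(n+1))) := by ring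
          _ = g 0 (mu n - mu (b+n)) *
                (∏ i ∈ range n, g (mu (i+1) - mu (b+(i+1))) (mu i - mu (b+(i+1)))) *
                g (mu n - mu (b+n)) (mu n - mu (b+(n+1))) := by rw [ih]
          _ = g 0 (mu n - mu (b+(n+1))) *
                (∏ i ∈ range n, g (mu (i+1) - mu (b+(i+1))) (mu i - mu (b+(i+1)))) := by
              rw [← g1]; ring
          _ = g 0 (mu (n+1) - mu (b+(n+1))) *
                ((∏ i ∈ range n, g (mu (i+1) - mu (b+(i+1))) (mu i - mu (b+(i+1)))) *
                  g (mu (n+1) - mu (b+(n+1))) (mu n - mu (b+(n+1)))) := by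
              rw [← g2]; ring
  -- assemble
  have hsplit : g 0 (a - mu b) = g 0 (mu 0 - mu b) * g (mu 0 - mu b) (a - mu b) := by
    rw [glue (by omega) (by omega)]
  rw [Finset.prod_range_succ, Finset.prod_range_succ']
  have he1 : mu (b+(e+1)) = 0 := h0 _ (by omega)
  have key : g 0 (mu e - mu (b+e)) * g (mu e - mu (b+e)) (mu e - mu (b+(e+1))) = g 0 (mu e) := by
    rw [glue (by omega) (by have := hA (show e ≤ b+e by omega); omega), he1, Nat.sub_zero]
  calc (∏ l ∈ range e, g (mu l - mu (b+l)) (mu l - mu (b+(l+1)))) *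
        g (mu e - mu (b+e)) (mu e - mu (b+(e+1))) * g 0 (a - mu b)
      = ((∏ l ∈ range e, g (mu l - mu (b+l)) (mu l - mu (b+(l+1)))) * g 0 (mu 0 - mu b)) *
          (g (mu e - mu (b+e)) (mu e - mu (b+(e+1))) * g (mu 0 - mu b) (a - mu b)) := by
        rw [hsplit]; ring
    _ = (g 0 (mu e - mu (b+e)) *
          ∏ i ∈ range e, g (mu (i+1) - mu (b+(i+1))) (mu i - mu (b+(i+1)))) *
          (g (mu e - mu (b+e)) (mu e - mu (b+(e+1))) * g (mu 0 - mu b) (a - mu b)) := by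
        rw [claim e]
    _ = g 0 (mu e) *
          ((∏ i ∈ range e, g (mu (i+1) - mu (b+(i+1))) (mu i - mu (b+(i+1)))) *
            g (mu 0 - mu b) (a - mu b)) := by
        rw [← key]; ring
    _ = g 0 (mu e) *
          ((∏ i ∈ range e,
              g (mu (i+1) - mu (b+(i+1))) ((if i+1 = 0 then a else mu (i+1-1)) - mu (b+(i+1)))) *
            g (mu 0 - mu (b+0)) ((if (0:ℕ) = 0 then a else mu (0-1)) - mu (b+0))) := by
        simp

lemma splitAt (m n : ℕ) (F : ℕ → ℝ) (h : m ≤ n) :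
    (∏ j ∈ range n, F j) = (∏ j ∈ range m, F j) * ∏ j ∈ Ico m n, F j := by
  rw [Finset.range_eq_Ico, ← Finset.prod_Ico_consecutive F (Nat.zero_le m) h,
    ← Finset.range_eq_Ico]

lemma core (mu : ℕ → ℕ) (hA : Antitone mu) (s N a : ℕ)
    (h0 : ∀ t, s ≤ t → mu t = 0) (hs : s ≤ N) (ha : mu 0 ≤ a) (k x : ℝ) :
    (∏ t ∈ range s, ∏ j ∈ range (a - mu t), ((j:ℝ) + k * (-1 - (t:ℝ)) + x)) *
      ∏ t ∈ range s, ∏ j ∈ range (mu t),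
        ((mu t : ℝ) - ((j:ℝ) + 1) + k * ((t:ℝ) - (conjPart mu N j : ℝ)) + x)
    = (∏ t ∈ range s, ∏ j ∈ range (a - mu t),
        ((j:ℝ) + k * ((conjPart mu N (j + mu t) : ℝ) - 1 - (t:ℝ)) + x)) *
      ∏ t ∈ range s, ∏ j ∈ range (mu t), ((j:ℝ) + k * ((t:ℝ) - (s:ℝ)) + x) := by
  classical
  rcases Nat.eq_zero_or_pos s with hs0 | hspos
  · simp [hs0]
  set cj : ℕ → ℕ := fun j => conjPart mu N j with hcj
  have hmta : ∀ t, mu t ≤ a := fun t => le_trans (hA (Nat.zero_le t)) ha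
  have hcs : ∀ j, cj j ≤ s := fun j => conj_le mu N s j h0
  have hiff : ∀ t j, t < cj j ↔ j < mu t := fun t j => lt_conj_iff mu N s hA h0 hs t j
  set fL : ℕ → ℕ → ℝ := fun t j =>
    if j < mu t then ((mu t : ℝ) - ((j:ℝ) + 1) + k * ((t:ℝ) - (cj j : ℝ)) + x)
    else ((j:ℝ) - (mu t : ℝ) + k * (-1 - (t:ℝ)) + x) with hfL
  set fR : ℕ → ℕ → ℝ := fun t j =>
    if j < mu t then ((j:ℝ) + k * ((t:ℝ) - (s:ℝ)) + x)
    else ((j:ℝ) - (mu t : ℝ) + k * ((cj j : ℝ) - 1 - (t:ℝ)) + x) with hfR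
  set hL : ℕ → ℕ → ℝ := fun t j =>
    if t < cj j then ((mu (cj j - (t+1)) : ℝ) - (j:ℝ) - 1 + (k * (-(t:ℝ) - 1) + x))
    else ((j:ℝ) - (mu t : ℝ) + (k * (-(t:ℝ) - 1) + x)) with hhL
  set hR : ℕ → ℕ → ℝ := fun t j =>
    if s - 1 - t < cj j then ((j:ℝ) + (k * (-(t:ℝ) - 1) + x))
    else ((j:ℝ) - (mu (cj j + t) : ℝ) + (k * (-(t:ℝ) - 1) + x)) with hhR
  -- Step 1 : LHS = ∏ t ∏ j<a, fL
  have step1 : (∏ t ∈ range s, ∏ j ∈ range (a - mu t), ((j:ℝ) + k * (-1 - (t:ℝ)) + x)) *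
      ∏ t ∈ range s, ∏ j ∈ range (mu t),
        ((mu t : ℝ) - ((j:ℝ) + 1) + k * ((t:ℝ) - (conjPart mu N j : ℝ)) + x)
      = ∏ t ∈ range s, ∏ j ∈ range a, fL t j := by
    rw [← Finset.prod_mul_distrib]
    apply Finset.prod_congr rfl
    intro t _
    rw [splitAt (mu t) a (fL t) (hmta t), mul_comm]
    congr 1
    · -- box part
      apply Finset.prod_congr rfl
      intro j hj
      simp only [mem_range] at hj
      simp only [hfL, if_pos hj, hcj]
    · -- nonbox part
      rw [Finset.prod_Ico_eq_prod_range]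
      apply Finset.prod_congr rfl
      intro i _
      have : ¬ (mu t + i < mu t) := by omega
      simp only [hfL, if_neg this]
      push_cast
      ring
  -- Step 1R : RHS = ∏ t ∏ j<a, fR
  have step1R : (∏ t ∈ range s, ∏ j ∈ range (a - mu t),
        ((j:ℝ) + k * ((conjPart mu N (j + mu t) : ℝ) - 1 - (t:ℝ)) + x)) *
      ∏ t ∈ range s, ∏ j ∈ range (mu t), ((j:ℝ) + k * ((t:ℝ) - (s:ℝ)) + x)
      = ∏ t ∈ range s, ∏ j ∈ range a, fR t j := by
    rw [← Finset.prod_mul_distrib]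
    apply Finset.prod_congr rfl
    intro t _
    rw [splitAt (mu t) a (fR t) (hmta t), mul_comm]
    congr 1
    · apply Finset.prod_congr rfl
      intro j hj
      simp only [mem_range] at hj
      simp only [hfR, if_pos hj]
    · rw [Finset.prod_Ico_eq_prod_range]
      apply Finset.prod_congr rfl
      intro i _
      have hni : ¬ (mu t + i < mu t) := by omega
      simp only [hfR, if_neg hni, hcj]
      rw [Nat.add_comm i (mu t)]
      push_cast
      ring
  -- Step 3 : per column, fL -> hL
  have step3 : ∀ j, (∏ t ∈ range s, fL t j) = ∏ t ∈ range s, hL t j := by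
    intro j
    rw [splitAt (cj j) s (fL · j) (hcs j), splitAt (cj j) s (hL · j) (hcs j)]
    congr 1
    · -- box part, reflect
      rw [← Finset.prod_range_reflect (fL · j) (cj j)]
      apply Finset.prod_congr rfl
      intro t ht
      simp only [mem_range] at ht
      have h1 : j < mu (cj j - 1 - t) := by
        rw [← hiff]
        omega
      simp only [hfL, hhL, if_pos h1, if_pos (show t < cj j by omega)]
      have h2 : cj j - 1 - t = cj j - (t+1) := by omega
      rw [h2]
      have h3 : ((cj j - (t+1) : ℕ) : ℝ) = (cj j : ℝ) - (t:ℝ) - 1 := by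
        rw [Nat.cast_sub (show t+1 ≤ cj j by omega)]
        push_cast
        ring
      rw [h3]
      ring
    · apply Finset.prod_congr rfl
      intro t ht
      simp only [mem_Ico] at ht
      have h1 : ¬ (j < mu t) := by rw [← hiff]; omega
      simp only [hfL, hhL, if_neg h1, if_neg (show ¬ (t < cj j) by omega)]
      ring
  -- Step 4 : per column, fR -> hR
  have step4 : ∀ j, (∏ t ∈ range s, fR t j) = ∏ t ∈ range s, hR t j := by
    intro j
    have hscs : s - cj j ≤ s := by omega
    rw [splitAt (cj j) s (fR · j) (hcs j), splitAt (s - cj j) s (hR · j) hscs, mul_comm]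
    congr 1
    · -- LHS nonbox (Ico c s) = RHS else (range (s-c))
      have hcsj := hcs j
      rw [Finset.prod_Ico_eq_prod_range]
      apply Finset.prod_congr rfl
      intro i hi
      simp only [mem_range] at hi
      have h1 : ¬ (j < mu (cj j + i)) := by rw [← hiff]; omega
      have h2 : ¬ (s - 1 - i < cj j) := by omega
      simp only [hfR, hhR, if_neg h1, if_neg h2]
      push_cast
      ring
    · -- LHS box (range c) = RHS if (Ico (s-c) s)
      have hcsj := hcs j
      calc (∏ t ∈ range (cj j), fR t j)
          = ∏ i ∈ range (cj j), hR (s - cj j + (cj j - 1 - i)) j := by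
            apply Finset.prod_congr rfl
            intro t ht
            simp only [mem_range] at ht
            have hidx : s - cj j + (cj j - 1 - t) = s - 1 - t := by omega
            rw [hidx]
            have h1 : j < mu t := by rw [← hiff]; omega
            have h2 : s - 1 - (s - 1 - t) < cj j := by omega
            simp only [hfR, hhR, if_pos h1, if_pos h2]
            rw [Nat.cast_sub (show t ≤ s - 1 by omega), Nat.cast_sub (show 1 ≤ s by omega)]
            push_cast
            ring
        _ = ∏ i ∈ range (cj j), hR (s - cj j + i) j :=
            Finset.prod_range_reflect (fun i => hR (s - cj j + i) j) (cj j)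
        _ = ∏ t ∈ Ico (s - cj j) s, hR t j := by
            have hlen : s - (s - cj j) = cj j := by omega
            rw [Finset.prod_Ico_eq_prod_range, hlen]
  -- Step 5 : per row t, hL -> hR via per_u
  have step5 : ∀ t < s, (∏ j ∈ range a, hL t j) = ∏ j ∈ range a, hR t j := by
    intro t ht
    set C : ℝ := k * (-(t:ℝ) - 1) + x with hC
    set e : ℕ := s - 1 - t with he
    have hbe : t + e + 1 = s := by omega
    have hPU := per_u mu hA s N a t e h0 hs hbe ha C
    rw [splitAt (mu t) a (hL t) (hmta t), splitAt (mu e) a (hR t) (hmta e)]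
    calc (∏ j ∈ range (mu t), hL t j) * ∏ j ∈ Ico (mu t) a, hL t j
        = (∏ j ∈ range (mu t), ((mu (cj j - (t+1)) : ℝ) - (j:ℝ) - 1 + C)) *
            ∏ j ∈ Ico (mu t) a, ((j : ℝ) - (mu t : ℝ) + C) := by
          congr 1
          · apply Finset.prod_congr rfl
            intro j hj
            simp only [mem_range] at hj
            simp only [hhL, if_pos ((hiff t j).2 hj)]
            rfl
          · apply Finset.prod_congr rfl
            intro j hj
            simp only [mem_Ico] at hj
            have h1 : ¬ (t < cj j) := by rw [hiff]; omega
            simp only [hhL, if_neg h1]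
            rfl
      _ = (∏ j ∈ range (mu e), ((j : ℝ) + C)) *
            ∏ j ∈ Ico (mu e) a, ((j : ℝ) - (mu (cj j + t) : ℝ) + C) := hPU
      _ = (∏ j ∈ range (mu e), hR t j) * ∏ j ∈ Ico (mu e) a, hR t j := by
          congr 1
          · apply Finset.prod_congr rfl
            intro j hj
            simp only [mem_range] at hj
            have h1 : s - 1 - t < cj j := by
              rw [hiff, show s - 1 - t = e from he.symm ▸ rfl]
              exact hj
            simp only [hhR, if_pos h1]
            rfl
          · apply Finset.prod_congr rfl
            intro j hj
            simp only [mem_Ico] at hj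
            have h1 : ¬ (s - 1 - t < cj j) := by
              rw [hiff, show s - 1 - t = e from he.symm ▸ rfl]
              omega
            simp only [hhR, if_neg h1]
            rfl
  rw [step1, step1R]
  rw [Finset.prod_comm]
  rw [Finset.prod_congr rfl (fun j _ => step3 j)]
  rw [Finset.prod_comm]
  rw [Finset.prod_congr rfl (fun t ht => step5 t (by simpa using ht))]
  rw [Finset.prod_comm]
  rw [Finset.prod_congr rfl (fun j _ => (step4 j).symm)]
  rw [Finset.prod_comm]

/-- φ_N(ν,x) = φ_N(λ,x) · φ_N(μ,x) · φ_N(λ,μ,x) as rational functions of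
x and k, where ν is obtained by joining λ (shifted by a) with the complement of μ and
φ_N(λ,μ,x) is the explicit double product; stated for all x, k for which all denominators
involved are nonzero. -/
theorem stmt_9 (r s N a : ℕ) (lam mu : ℕ → ℕ) (k x : ℝ)
    (hlamA : Antitone lam) (hmuA : Antitone mu)
    (hlam0 : ∀ i, r ≤ i → lam i = 0) (hmu0 : ∀ i, s ≤ i → mu i = 0)
    (hlampos : ∀ i < r, 0 < lam i) (hmupos : ∀ i < s, 0 < mu i)
    (ha : mu 0 ≤ a) (hN : r + s ≤ N)
    (hdnu : ∀ i < N, ∀ j < nuJoin lam mu r s N a i,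
      (nuJoin lam mu r s N a i : ℝ) - ((j : ℝ) + 1)
        + k * ((i : ℝ) - (conjPart (nuJoin lam mu r s N a) N j : ℝ)) + x ≠ 0)
    (hdlam : ∀ i < N, ∀ j < lam i,
      (lam i : ℝ) - ((j : ℝ) + 1) + k * ((i : ℝ) - (conjPart lam N j : ℝ)) + x ≠ 0)
    (hdmu : ∀ i < N, ∀ j < mu i,
      (mu i : ℝ) - ((j : ℝ) + 1) + k * ((i : ℝ) - (conjPart mu N j : ℝ)) + x ≠ 0)
    (hdd1 : ∀ i < r, ∀ j < mu 0, (j : ℝ) + k * ((i : ℝ) - (N : ℝ)) + x ≠ 0)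
    (hdd2 : ∀ i < r, ∀ j < mu 0,
      (lam i : ℝ) + (j : ℝ) + k * ((i : ℝ) + (conjPart mu N j : ℝ) - (N : ℝ)) + x ≠ 0) :
    phiP (nuJoin lam mu r s N a) N N x k =
      phiP lam N N x k * phiP mu N N x k *
        ∏ i ∈ Finset.range r, ∏ j ∈ Finset.range (mu 0),
          (((lam i : ℝ) + (j : ℝ) + k * ((i : ℝ) - (N : ℝ)) + x) /
              ((j : ℝ) + k * ((i : ℝ) - (N : ℝ)) + x)) *
            (((j : ℝ) + k * ((i : ℝ) + (conjPart mu N j : ℝ) - (N : ℝ)) + x) /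
              ((lam i : ℝ) + (j : ℝ) + k * ((i : ℝ) + (conjPart mu N j : ℝ) - (N : ℝ)) + x)) := by
  classical
  have hsN : s ≤ N := by omega
  have hrNs : r ≤ N - s := by omega
  have hNsN : N - s ≤ N := by omega
  set ν : ℕ → ℕ := nuJoin lam mu r s N a with hν
  -- values of ν
  have hν1 : ∀ i < r, ν i = lam i + a := by
    intro i hi; simp [hν, nuJoin, hi]
  have hν2 : ∀ i, r ≤ i → i < N - s → ν i = a := by
    intro i h1 h2; simp [hν, nuJoin, h2]; omega
  have hν3 : ∀ t < s, ν (N - 1 - t) = a - mu t := by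
    intro t ht
    have h1 : ¬ (N - 1 - t < r) := by omega
    have h2 : ¬ (N - 1 - t < N - s) := by omega
    have h3 : N - 1 - t < N := by omega
    simp only [hν, nuJoin, if_neg h1, if_neg h2, if_pos h3]
    rw [show N - 1 - (N - 1 - t) = t from by omega]
  -- conjugate facts
  have F1 : ∀ j, conjPart ν N (a + j) = conjPart lam N j := by
    intro j
    unfold conjPart
    congr 1
    apply Finset.filter_congr
    intro i hi
    simp only [mem_range] at hi
    try simp only [eq_iff_iff]
    by_cases h1 : i < r
    · rw [hν1 i h1]; constructor <;> intro <;> omega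
    · push_neg at h1
      have hli : lam i = 0 := hlam0 i h1
      by_cases h2 : i < N - s
      · rw [hν2 i h1 h2]; omega
      · push_neg at h2
        have : ν i = a - mu (N - 1 - i) := by
          simp only [hν, nuJoin, if_neg (by omega : ¬ i < r), if_neg (by omega : ¬ i < N - s),
            if_pos hi]
        rw [this]
        constructor <;> intro <;> omega
  have F2 : ∀ j < a, conjPart ν N j + conjPart mu N (a - 1 - j) = N := by
    intro j hj
    have hsplit : (range N).filter (fun i => j < ν i) =
        (range N) \ ((range N).filter fun i => ν i ≤ j) := by
      ext i
      simp only [mem_filter, mem_sdiff, mem_range]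
      constructor
      · intro h; exact ⟨h.1, fun hc => by omega⟩
      · intro h
        refine ⟨h.1, ?_⟩
        by_contra hc
        exact h.2 ⟨h.1, by omega⟩
    have hcard : ((range N).filter fun i => ν i ≤ j).card = conjPart mu N (a - 1 - j) := by
      unfold conjPart
      apply Finset.card_nbij' (fun i => N - 1 - i) (fun t => N - 1 - t)
      · intro i hi
        simp only [mem_filter, mem_range, Finset.mem_coe] at hi ⊢
        have h1 : ¬ (i < r) := by
          intro hc
          rw [hν1 i hc] at hi
          omega
        have h2 : ¬ (i < N - s) := by
          intro hc
          rw [hν2 i (by omega) hc] at hi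
          omega
        have h3 : ν i = a - mu (N - 1 - i) := by
          simp only [hν, nuJoin, if_neg h1, if_neg h2, if_pos hi.1]
        refine ⟨by omega, ?_⟩
        rw [h3] at hi
        have hpos : 0 < mu (N - 1 - i) := by omega
        omega
      · intro t ht
        simp only [mem_filter, mem_range, Finset.mem_coe] at ht ⊢
        have hts : t < s := by
          by_contra hc
          push_neg at hc
          rw [hmu0 t hc] at ht
          omega
        have h3 : ν (N - 1 - t) = a - mu t := hν3 t hts
        refine ⟨by omega, ?_⟩
        rw [h3]
        omega
      · intro i hi
        simp only [mem_filter, mem_range, Finset.mem_coe] at hi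
        have h1 : ¬ (i < r) := by
          intro hc
          rw [hν1 i hc] at hi
          omega
        have h2 : ¬ (i < N - s) := by
          intro hc
          rw [hν2 i (by omega) hc] at hi
          omega
        dsimp only
        omega
      · intro t ht
        simp only [mem_filter, mem_range, Finset.mem_coe] at ht
        have hts : t < s := by
          by_contra hc
          push_neg at hc
          rw [hmu0 t hc] at ht
          omega
        dsimp only
        omega
    unfold conjPart
    rw [hsplit, Finset.card_sdiff_of_subset (Finset.filter_subset _ _), card_range, hcard]
    have h1 := conj_le mu N s (a - 1 - j) hmu0
    have h2 : ((range N).filter fun i => a - 1 - j < mu i).card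
        = conjPart mu N (a - 1 - j) := rfl
    omega
  -- helper: split rows, reflect bottom rows
  have rowreflect : ∀ (F : ℕ → ℝ), (∏ i ∈ Ico (N - s) N, F i) = ∏ t ∈ range s, F (N - 1 - t) := by
    intro F
    rw [Finset.prod_Ico_eq_prod_range, show N - (N - s) = s from by omega,
      ← Finset.prod_range_reflect (fun i0 => F (N - s + i0)) s]
    apply Finset.prod_congr rfl
    intro t ht
    simp only [mem_range] at ht
    rw [show N - s + (s - 1 - t) = N - 1 - t from by omega]
  have rowsplit : ∀ (F : ℕ → ℝ), (∏ i ∈ range N, F i)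
      = ((∏ i ∈ range r, F i) * ∏ i ∈ Ico r (N - s), F i) * ∏ t ∈ range s, F (N - 1 - t) := by
    intro F
    rw [splitAt (N - s) N F hNsN, splitAt r (N - s) F hrNs, rowreflect]
  -- decomposition of the ν-numerator
  have eNL : (∏ i ∈ range N, ∏ j ∈ range (ν i), ((j:ℝ) + k * ((i:ℝ) - (N:ℝ)) + x))
      = (((∏ i ∈ range r, ∏ j ∈ range (lam i), ((j:ℝ) + k * ((i:ℝ) - (N:ℝ)) + x)) *
          ((∏ i ∈ range r, ∏ j ∈ range (mu 0), ((lam i:ℝ) + (j:ℝ) + k * ((i:ℝ) - (N:ℝ)) + x)) *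
           (∏ i ∈ range r, ∏ j ∈ Ico (mu 0) a, ((lam i:ℝ) + (j:ℝ) + k * ((i:ℝ) - (N:ℝ)) + x)))) *
         ((∏ i ∈ Ico r (N - s), ∏ j ∈ range (mu 0), ((j:ℝ) + k * ((i:ℝ) - (N:ℝ)) + x)) *
          (∏ i ∈ Ico r (N - s), ∏ j ∈ Ico (mu 0) a, ((j:ℝ) + k * ((i:ℝ) - (N:ℝ)) + x)))) *
        (∏ t ∈ range s, ∏ j ∈ range (a - mu t), ((j:ℝ) + k * (-1 - (t:ℝ)) + x)) := by
    rw [rowsplit]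
    congr 1
    · congr 1
      · rw [← Finset.prod_mul_distrib, ← Finset.prod_mul_distrib]
        apply Finset.prod_congr rfl
        intro i hi
        simp only [mem_range] at hi
        rw [hν1 i hi, splitAt (lam i) (lam i + a) _ (by omega)]
        congr 1
        rw [Finset.prod_Ico_eq_prod_range, show lam i + a - lam i = a from by omega,
          splitAt (mu 0) a _ ha]
        congr 1
        · apply Finset.prod_congr rfl
          intro j _
          push_cast
          ring
        · apply Finset.prod_congr rfl
          intro j _
          push_cast
          ring
      · rw [← Finset.prod_mul_distrib]
        apply Finset.prod_congr rfl
        intro i hi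
        simp only [mem_Ico] at hi
        rw [hν2 i hi.1 hi.2, splitAt (mu 0) a _ ha]
    · apply Finset.prod_congr rfl
      intro t ht
      simp only [mem_range] at ht
      rw [hν3 t ht]
      apply Finset.prod_congr rfl
      intro j _
      rw [show ((N - 1 - t : ℕ):ℝ) = (N:ℝ) - 1 - (t:ℝ) from by
        rw [Nat.cast_sub (show t ≤ N - 1 by omega), Nat.cast_sub (show 1 ≤ N by omega)]
        push_cast; ring]
      ring
  -- decomposition of the ν-denominator
  have eDL : (∏ i ∈ range N, ∏ j ∈ range (ν i),
        ((ν i:ℝ) - ((j:ℝ) + 1) + k * ((i:ℝ) - (conjPart ν N j : ℝ)) + x))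
      = (((∏ i ∈ range r, ∏ j ∈ range (lam i),
            ((lam i:ℝ) - ((j:ℝ) + 1) + k * ((i:ℝ) - (conjPart lam N j : ℝ)) + x)) *
          ((∏ i ∈ range r, ∏ j ∈ range (mu 0),
            ((lam i:ℝ) + (j:ℝ) + k * ((i:ℝ) + (conjPart mu N j : ℝ) - (N:ℝ)) + x)) *
           (∏ i ∈ range r, ∏ j ∈ Ico (mu 0) a,
            ((lam i:ℝ) + (j:ℝ) + k * ((i:ℝ) - (N:ℝ)) + x)))) *
         ((∏ i ∈ Ico r (N - s), ∏ j ∈ range (mu 0),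
            ((j:ℝ) + k * ((i:ℝ) + (conjPart mu N j : ℝ) - (N:ℝ)) + x)) *
          (∏ i ∈ Ico r (N - s), ∏ j ∈ Ico (mu 0) a, ((j:ℝ) + k * ((i:ℝ) - (N:ℝ)) + x)))) *
        (∏ t ∈ range s, ∏ j ∈ range (a - mu t),
          ((j:ℝ) + k * ((conjPart mu N (j + mu t) : ℝ) - 1 - (t:ℝ)) + x)) := by
    rw [rowsplit]
    have hlowrow : ∀ i, (∏ j ∈ range a,
          ((a:ℝ) - ((j:ℝ) + 1) + k * ((i:ℝ) - (conjPart ν N j : ℝ)) + x))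
        = ∏ j ∈ range a, ((j:ℝ) + k * ((i:ℝ) + (conjPart mu N j : ℝ) - (N:ℝ)) + x) := by
      intro i
      rw [← Finset.prod_range_reflect (fun j =>
        ((a:ℝ) - ((j:ℝ) + 1) + k * ((i:ℝ) - (conjPart ν N j : ℝ)) + x)) a]
      apply Finset.prod_congr rfl
      intro j hj
      simp only [mem_range] at hj
      have hc := F2 (a - 1 - j) (by omega)
      rw [show a - 1 - (a - 1 - j) = j from by omega] at hc
      have hcR : (conjPart ν N (a - 1 - j) : ℝ) = (N:ℝ) - (conjPart mu N j : ℝ) := by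
        have h2 : (conjPart ν N (a - 1 - j) : ℝ) + (conjPart mu N j : ℝ) = (N:ℝ) := by
          exact_mod_cast congrArg (Nat.cast : ℕ → ℝ) hc
        linarith
      rw [hcR, Nat.cast_sub (show j ≤ a - 1 by omega), Nat.cast_sub (show 1 ≤ a by omega)]
      push_cast
      ring
    congr 1
    · congr 1
      · -- rows < r
        rw [← Finset.prod_mul_distrib, ← Finset.prod_mul_distrib]
        apply Finset.prod_congr rfl
        intro i hi
        simp only [mem_range] at hi
        rw [hν1 i hi, splitAt a (lam i + a) _ (by omega), mul_comm]
        congr 1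
        · -- high part: j ∈ Ico a (lam i + a) ↦ λ-denominator
          rw [Finset.prod_Ico_eq_prod_range, show lam i + a - a = lam i from by omega]
          apply Finset.prod_congr rfl
          intro j _
          rw [F1 j]
          push_cast
          ring
        · -- low part: j < a, reflect
          have : (∏ j ∈ range a,
              (((lam i + a : ℕ):ℝ) - ((j:ℝ) + 1) + k * ((i:ℝ) - (conjPart ν N j : ℝ)) + x))
              = ∏ j ∈ range a, ((lam i:ℝ) + (j:ℝ) + k * ((i:ℝ) + (conjPart mu N j : ℝ) - (N:ℝ)) + x) := by
            rw [← Finset.prod_range_reflect (fun j =>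
              (((lam i + a : ℕ):ℝ) - ((j:ℝ) + 1) + k * ((i:ℝ) - (conjPart ν N j : ℝ)) + x)) a]
            apply Finset.prod_congr rfl
            intro j hj
            simp only [mem_range] at hj
            have hc := F2 (a - 1 - j) (by omega)
            rw [show a - 1 - (a - 1 - j) = j from by omega] at hc
            have hcR : (conjPart ν N (a - 1 - j) : ℝ) = (N:ℝ) - (conjPart mu N j : ℝ) := by
              have h2 : (conjPart ν N (a - 1 - j) : ℝ) + (conjPart mu N j : ℝ) = (N:ℝ) := by
                exact_mod_cast congrArg (Nat.cast : ℕ → ℝ) hc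
              linarith
            rw [hcR, Nat.cast_sub (show j ≤ a - 1 by omega), Nat.cast_sub (show 1 ≤ a by omega)]
            push_cast
            ring
          rw [this, splitAt (mu 0) a _ ha]
          congr 1
          apply Finset.prod_congr rfl
          intro j hj
          simp only [mem_Ico] at hj
          rw [conj_eq_zero mu N j hmuA hj.1]
          push_cast
          ring
      · -- middle rows
        rw [← Finset.prod_mul_distrib]
        apply Finset.prod_congr rfl
        intro i hi
        simp only [mem_Ico] at hi
        rw [hν2 i hi.1 hi.2]
        rw [show (∏ j ∈ range a, ((a:ℝ) - ((j:ℝ) + 1) + k * ((i:ℝ) - (conjPart ν N j : ℝ)) + x))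
            = ∏ j ∈ range a, ((j:ℝ) + k * ((i:ℝ) + (conjPart mu N j : ℝ) - (N:ℝ)) + x)
          from hlowrow i]
        rw [splitAt (mu 0) a _ ha]
        congr 1
        apply Finset.prod_congr rfl
        intro j hj
        simp only [mem_Ico] at hj
        rw [conj_eq_zero mu N j hmuA hj.1]
        push_cast
        ring
    · -- bottom rows
      apply Finset.prod_congr rfl
      intro t ht
      simp only [mem_range] at ht
      rw [hν3 t ht]
      rw [← Finset.prod_range_reflect (fun j =>
        (((a - mu t : ℕ):ℝ) - ((j:ℝ) + 1) + k * (((N - 1 - t : ℕ):ℝ) - (conjPart ν N j : ℝ)) + x))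
        (a - mu t)]
      apply Finset.prod_congr rfl
      intro j hj
      simp only [mem_range] at hj
      have hmta : mu t ≤ a := le_trans (hmuA (Nat.zero_le t)) ha
      have hc := F2 (a - mu t - 1 - j) (by omega)
      rw [show a - 1 - (a - mu t - 1 - j) = j + mu t from by omega] at hc
      have hcR : (conjPart ν N (a - mu t - 1 - j) : ℝ)
          = (N:ℝ) - (conjPart mu N (j + mu t) : ℝ) := by
        have h2 : (conjPart ν N (a - mu t - 1 - j) : ℝ) + (conjPart mu N (j + mu t) : ℝ)
            = (N:ℝ) := by
          exact_mod_cast congrArg (Nat.cast : ℕ → ℝ) hc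
        linarith
      rw [hcR, Nat.cast_sub (show j ≤ a - mu t - 1 by omega),
        Nat.cast_sub (show 1 ≤ a - mu t by omega), Nat.cast_sub hmta,
        Nat.cast_sub (show t ≤ N - 1 by omega), Nat.cast_sub (show 1 ≤ N by omega)]
      push_cast
      ring
  -- restriction of λ and μ products to their support
  have etrunc : ∀ (m : ℕ) (w : ℕ → ℕ) (G : ℕ → ℕ → ℝ), m ≤ N → (∀ i, m ≤ i → w i = 0) →
      (∏ i ∈ range N, ∏ j ∈ range (w i), G i j) = ∏ i ∈ range m, ∏ j ∈ range (w i), G i j := by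
    intro m w G hm hw
    rw [splitAt m N _ hm]
    have : (∏ i ∈ Ico m N, ∏ j ∈ range (w i), G i j) = 1 := by
      apply Finset.prod_eq_one
      intro i hi
      simp only [mem_Ico] at hi
      rw [hw i hi.1]
      simp
    rw [this, mul_one]
  -- the core + column identities
  have keySS : (∏ t ∈ range s, ∏ j ∈ range (a - mu t), ((j:ℝ) + k * (-1 - (t:ℝ)) + x)) *
        (∏ t ∈ range s, ∏ j ∈ range (mu t),
          ((mu t:ℝ) - ((j:ℝ) + 1) + k * ((t:ℝ) - (conjPart mu N j : ℝ)) + x)) *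
        ((∏ i ∈ range r, ∏ j ∈ range (mu 0), ((j:ℝ) + k * ((i:ℝ) - (N:ℝ)) + x)) *
         (∏ i ∈ Ico r (N - s), ∏ j ∈ range (mu 0), ((j:ℝ) + k * ((i:ℝ) - (N:ℝ)) + x)))
      = (∏ t ∈ range s, ∏ j ∈ range (mu t), ((j:ℝ) + k * ((t:ℝ) - (N:ℝ)) + x)) *
        ((∏ i ∈ range r, ∏ j ∈ range (mu 0),
            ((j:ℝ) + k * ((i:ℝ) + (conjPart mu N j : ℝ) - (N:ℝ)) + x)) *
         (∏ i ∈ Ico r (N - s), ∏ j ∈ range (mu 0),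
            ((j:ℝ) + k * ((i:ℝ) + (conjPart mu N j : ℝ) - (N:ℝ)) + x))) *
        (∏ t ∈ range s, ∏ j ∈ range (a - mu t),
          ((j:ℝ) + k * ((conjPart mu N (j + mu t) : ℝ) - 1 - (t:ℝ)) + x)) := by
    have key1 := core mu hmuA s N a hmu0 hsN ha k x
    have key2 : (∏ i ∈ range r, ∏ j ∈ range (mu 0), ((j:ℝ) + k * ((i:ℝ) - (N:ℝ)) + x)) *
        (∏ i ∈ Ico r (N - s), ∏ j ∈ range (mu 0), ((j:ℝ) + k * ((i:ℝ) - (N:ℝ)) + x))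
        = ∏ j ∈ range (mu 0), ∏ i ∈ range (N - s), ((j:ℝ) + k * ((i:ℝ) - (N:ℝ)) + x) := by
      rw [← splitAt r (N - s) _ hrNs]
      exact Finset.prod_comm
    have key3 : (∏ i ∈ range r, ∏ j ∈ range (mu 0),
          ((j:ℝ) + k * ((i:ℝ) + (conjPart mu N j : ℝ) - (N:ℝ)) + x)) *
        (∏ i ∈ Ico r (N - s), ∏ j ∈ range (mu 0),
          ((j:ℝ) + k * ((i:ℝ) + (conjPart mu N j : ℝ) - (N:ℝ)) + x))
        = ∏ j ∈ range (mu 0), ∏ i ∈ range (N - s),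
            ((j:ℝ) + k * ((i:ℝ) + (conjPart mu N j : ℝ) - (N:ℝ)) + x) := by
      rw [← splitAt r (N - s) _ hrNs]
      exact Finset.prod_comm
    have key5 : (∏ t ∈ range s, ∏ j ∈ range (mu t), ((j:ℝ) + k * ((t:ℝ) - (s:ℝ)) + x))
        = ∏ j ∈ range (mu 0), ∏ i ∈ Ico (N - s) (N - s + conjPart mu N j),
            ((j:ℝ) + k * ((i:ℝ) - (N:ℝ)) + x) := by
      rw [← box_swap mu N s hmuA hmu0 hsN (fun t j => ((j:ℝ) + k * ((t:ℝ) - (s:ℝ)) + x))]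
      apply Finset.prod_congr rfl
      intro j _
      rw [Finset.prod_Ico_eq_prod_range,
        show N - s + conjPart mu N j - (N - s) = conjPart mu N j from by omega]
      apply Finset.prod_congr rfl
      intro i _
      rw [show ((N - s + i : ℕ):ℝ) = (N:ℝ) - (s:ℝ) + (i:ℝ) from by
        push_cast [Nat.cast_sub hsN]; ring]
      ring
    have key6 : (∏ t ∈ range s, ∏ j ∈ range (mu t), ((j:ℝ) + k * ((t:ℝ) - (N:ℝ)) + x))
        = ∏ j ∈ range (mu 0), ∏ i ∈ range (conjPart mu N j),
            ((j:ℝ) + k * ((i:ℝ) - (N:ℝ)) + x) :=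
      (box_swap mu N s hmuA hmu0 hsN (fun t j => ((j:ℝ) + k * ((t:ℝ) - (N:ℝ)) + x))).symm
    have colkey : ∀ j : ℕ,
        (∏ i ∈ Ico (N - s) (N - s + conjPart mu N j), ((j:ℝ) + k * ((i:ℝ) - (N:ℝ)) + x)) *
          (∏ i ∈ range (N - s), ((j:ℝ) + k * ((i:ℝ) - (N:ℝ)) + x))
        = (∏ i ∈ range (conjPart mu N j), ((j:ℝ) + k * ((i:ℝ) - (N:ℝ)) + x)) *
          ∏ i ∈ range (N - s), ((j:ℝ) + k * ((i:ℝ) + (conjPart mu N j : ℝ) - (N:ℝ)) + x) := by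
      intro j
      have e1 : (∏ i ∈ range (N - s), ((j:ℝ) + k * ((i:ℝ) + (conjPart mu N j : ℝ) - (N:ℝ)) + x))
          = ∏ i ∈ Ico (conjPart mu N j) (conjPart mu N j + (N - s)),
              ((j:ℝ) + k * ((i:ℝ) - (N:ℝ)) + x) := by
        rw [Finset.prod_Ico_eq_prod_range,
          show conjPart mu N j + (N - s) - conjPart mu N j = N - s from by omega]
        apply Finset.prod_congr rfl
        intro i _
        push_cast
        ring
      calc (∏ i ∈ Ico (N - s) (N - s + conjPart mu N j), ((j:ℝ) + k * ((i:ℝ) - (N:ℝ)) + x)) *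
            (∏ i ∈ range (N - s), ((j:ℝ) + k * ((i:ℝ) - (N:ℝ)) + x))
          = (∏ i ∈ range (N - s), ((j:ℝ) + k * ((i:ℝ) - (N:ℝ)) + x)) *
            (∏ i ∈ Ico (N - s) (N - s + conjPart mu N j), ((j:ℝ) + k * ((i:ℝ) - (N:ℝ)) + x)) := by
            ring
        _ = ∏ i ∈ range (N - s + conjPart mu N j), ((j:ℝ) + k * ((i:ℝ) - (N:ℝ)) + x) :=
            (splitAt (N - s) (N - s + conjPart mu N j) _ (by omega)).symm
        _ = (∏ i ∈ range (conjPart mu N j), ((j:ℝ) + k * ((i:ℝ) - (N:ℝ)) + x)) *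
            ∏ i ∈ Ico (conjPart mu N j) (N - s + conjPart mu N j),
              ((j:ℝ) + k * ((i:ℝ) - (N:ℝ)) + x) :=
            splitAt (conjPart mu N j) _ _ (by omega)
        _ = (∏ i ∈ range (conjPart mu N j), ((j:ℝ) + k * ((i:ℝ) - (N:ℝ)) + x)) *
            ∏ i ∈ range (N - s), ((j:ℝ) + k * ((i:ℝ) + (conjPart mu N j : ℝ) - (N:ℝ)) + x) := by
            rw [e1, show N - s + conjPart mu N j = conjPart mu N j + (N - s) from by omega]
    calc (∏ t ∈ range s, ∏ j ∈ range (a - mu t), ((j:ℝ) + k * (-1 - (t:ℝ)) + x)) *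
          (∏ t ∈ range s, ∏ j ∈ range (mu t),
            ((mu t:ℝ) - ((j:ℝ) + 1) + k * ((t:ℝ) - (conjPart mu N j : ℝ)) + x)) *
          ((∏ i ∈ range r, ∏ j ∈ range (mu 0), ((j:ℝ) + k * ((i:ℝ) - (N:ℝ)) + x)) *
           (∏ i ∈ Ico r (N - s), ∏ j ∈ range (mu 0), ((j:ℝ) + k * ((i:ℝ) - (N:ℝ)) + x)))
        = ((∏ t ∈ range s, ∏ j ∈ range (a - mu t),
              ((j:ℝ) + k * ((conjPart mu N (j + mu t) : ℝ) - 1 - (t:ℝ)) + x)) *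
            ∏ t ∈ range s, ∏ j ∈ range (mu t), ((j:ℝ) + k * ((t:ℝ) - (s:ℝ)) + x)) *
          (∏ j ∈ range (mu 0), ∏ i ∈ range (N - s), ((j:ℝ) + k * ((i:ℝ) - (N:ℝ)) + x)) := by
          rw [key1, key2]
      _ = (∏ t ∈ range s, ∏ j ∈ range (a - mu t),
              ((j:ℝ) + k * ((conjPart mu N (j + mu t) : ℝ) - 1 - (t:ℝ)) + x)) *
          ∏ j ∈ range (mu 0),
            ((∏ i ∈ Ico (N - s) (N - s + conjPart mu N j), ((j:ℝ) + k * ((i:ℝ) - (N:ℝ)) + x)) *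
             (∏ i ∈ range (N - s), ((j:ℝ) + k * ((i:ℝ) - (N:ℝ)) + x))) := by
          rw [key5, mul_assoc, ← Finset.prod_mul_distrib]
      _ = (∏ t ∈ range s, ∏ j ∈ range (a - mu t),
              ((j:ℝ) + k * ((conjPart mu N (j + mu t) : ℝ) - 1 - (t:ℝ)) + x)) *
          ∏ j ∈ range (mu 0),
            ((∏ i ∈ range (conjPart mu N j), ((j:ℝ) + k * ((i:ℝ) - (N:ℝ)) + x)) *
             ∏ i ∈ range (N - s), ((j:ℝ) + k * ((i:ℝ) + (conjPart mu N j : ℝ) - (N:ℝ)) + x)) := by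
          rw [Finset.prod_congr rfl (fun j _ => colkey j)]
      _ = (∏ t ∈ range s, ∏ j ∈ range (mu t), ((j:ℝ) + k * ((t:ℝ) - (N:ℝ)) + x)) *
          ((∏ i ∈ range r, ∏ j ∈ range (mu 0),
              ((j:ℝ) + k * ((i:ℝ) + (conjPart mu N j : ℝ) - (N:ℝ)) + x)) *
           (∏ i ∈ Ico r (N - s), ∏ j ∈ range (mu 0),
              ((j:ℝ) + k * ((i:ℝ) + (conjPart mu N j : ℝ) - (N:ℝ)) + x))) *
          (∏ t ∈ range s, ∏ j ∈ range (a - mu t),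
            ((j:ℝ) + k * ((conjPart mu N (j + mu t) : ℝ) - 1 - (t:ℝ)) + x)) := by
          rw [Finset.prod_mul_distrib, key3, ← key6]
          rw [Finset.prod_comm (s := range (mu 0)) (t := range (N - s))]
          ring
  -- nonvanishing
  have hDL : (∏ i ∈ range N, ∏ j ∈ range (ν i),
      ((ν i:ℝ) - ((j:ℝ) + 1) + k * ((i:ℝ) - (conjPart ν N j : ℝ)) + x)) ≠ 0 := by
    rw [Finset.prod_ne_zero_iff]
    intro i hi
    rw [Finset.prod_ne_zero_iff]
    intro j hj
    exact hdnu i (mem_range.1 hi) j (mem_range.1 hj)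
  have hDlam : (∏ i ∈ range N, ∏ j ∈ range (lam i),
      ((lam i:ℝ) - ((j:ℝ) + 1) + k * ((i:ℝ) - (conjPart lam N j : ℝ)) + x)) ≠ 0 := by
    rw [Finset.prod_ne_zero_iff]
    intro i hi
    rw [Finset.prod_ne_zero_iff]
    intro j hj
    exact hdlam i (mem_range.1 hi) j (mem_range.1 hj)
  have hDmu : (∏ i ∈ range N, ∏ j ∈ range (mu i),
      ((mu i:ℝ) - ((j:ℝ) + 1) + k * ((i:ℝ) - (conjPart mu N j : ℝ)) + x)) ≠ 0 := by
    rw [Finset.prod_ne_zero_iff]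
    intro i hi
    rw [Finset.prod_ne_zero_iff]
    intro j hj
    exact hdmu i (mem_range.1 hi) j (mem_range.1 hj)
  have hDD : (∏ i ∈ range r, ∏ j ∈ range (mu 0),
      (((j:ℝ) + k * ((i:ℝ) - (N:ℝ)) + x) *
        ((lam i:ℝ) + (j:ℝ) + k * ((i:ℝ) + (conjPart mu N j : ℝ) - (N:ℝ)) + x))) ≠ 0 := by
    rw [Finset.prod_ne_zero_iff]
    intro i hi
    rw [Finset.prod_ne_zero_iff]
    intro j hj
    exact mul_ne_zero (hdd1 i (mem_range.1 hi) j (mem_range.1 hj))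
      (hdd2 i (mem_range.1 hi) j (mem_range.1 hj))
  -- division normalization
  rw [phiP, phiP, phiP]
  simp only [Finset.prod_div_distrib, div_mul_div_comm]
  rw [div_eq_div_iff hDL (mul_ne_zero (mul_ne_zero hDlam hDmu) hDD)]
  rw [eNL, eDL]
  rw [etrunc r lam _ (by omega) hlam0, etrunc r lam _ (by omega) hlam0,
    etrunc s mu _ hsN hmu0, etrunc s mu _ hsN hmu0]
  simp only [Finset.prod_mul_distrib]
  linear_combination ((∏ i ∈ range r, ∏ j ∈ range (lam i), ((j:ℝ) + k * ((i:ℝ) - (N:ℝ)) + x)) *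
    (∏ i ∈ range r, ∏ j ∈ range (mu 0), ((lam i:ℝ) + (j:ℝ) + k * ((i:ℝ) - (N:ℝ)) + x)) *
    (∏ i ∈ range r, ∏ j ∈ Ico (mu 0) a, ((lam i:ℝ) + (j:ℝ) + k * ((i:ℝ) - (N:ℝ)) + x)) *
    (∏ i ∈ Ico r (N - s), ∏ j ∈ Ico (mu 0) a, ((j:ℝ) + k * ((i:ℝ) - (N:ℝ)) + x)) *
    (∏ i ∈ range r, ∏ j ∈ range (lam i),
      ((lam i:ℝ) - ((j:ℝ) + 1) + k * ((i:ℝ) - (conjPart lam N j : ℝ)) + x)) *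
    (∏ i ∈ range r, ∏ j ∈ range (mu 0),
      ((lam i:ℝ) + (j:ℝ) + k * ((i:ℝ) + (conjPart mu N j : ℝ) - (N:ℝ)) + x))) * keySS
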